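/- Let d ≥ 1, Ψ = (ψ_0, …, ψ_d) ∈ ℝ^{d+1}, and x ∈ [−1,1]. Then Z · U(x,−Ψ) · Z equals the entrywise complex conjugate of U(x,Ψ). Moreover, defining Ψ̃ = (ψ̃_0, …, ψ̃_d) by ψ̃_0 = −ψ_0 + (−1)^d π/2, ψ̃_k = −ψ_k + (−1)^{d−k} π for 1 ≤ k ≤ d−1, and ψ̃_d = −ψ_d + π/2, one has U(x,Ψ̃) equals the entrywise complex conjugate of U(x,Ψ). -/

import Mathlib

open Matrix Polynomial Complex

/-- The Pauli X matrix. -/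
noncomputable def PX : Matrix (Fin 2) (Fin 2) ℂ := !![0, 1; 1, 0]

/-- The Pauli Z matrix. -/
noncomputable def PZ : Matrix (Fin 2) (Fin 2) ℂ := !![1, 0; 0, -1]

/-- The QSP unitary `U(x, Ψ) = e^{iψ₀Z} ∏_{j=1}^d e^{i arccos(x) X} e^{iψⱼ Z}`,
the product taken with `j` increasing from left to right. -/
noncomputable def qspU (d : ℕ) (Ψ : Fin (d + 1) → ℝ) (x : ℝ) : Matrix (Fin 2) (Fin 2) ℂ :=
  NormedSpace.exp ((Complex.I * (Ψ 0 : ℂ)) • PZ) *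
    ((List.finRange d).map (fun j =>
      NormedSpace.exp ((Complex.I * (Real.arccos x : ℂ)) • PX) *
      NormedSpace.exp ((Complex.I * ((Ψ j.succ : ℝ) : ℂ)) • PZ))).prod

/-- The matrix `[[P(x), i√(1-x²) Q(x)], [i√(1-x²) Q*(x), P*(x)]]`, where `P*`, `Q*` have
complex-conjugated coefficients. -/
noncomputable def qspMat (P Q : Polynomial ℂ) (x : ℝ) : Matrix (Fin 2) (Fin 2) ℂ :=
  !![P.eval (x : ℂ), Complex.I * (Real.sqrt (1 - x ^ 2) : ℂ) * Q.eval (x : ℂ);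
     Complex.I * (Real.sqrt (1 - x ^ 2) : ℂ) * (Q.map (starRingEnd ℂ)).eval (x : ℂ),
     (P.map (starRingEnd ℂ)).eval (x : ℂ)]

namespace QSPaux

/-- The diagonal phase matrix `e^{iψZ}`. -/
noncomputable def Dr (ψ : ℝ) : Matrix (Fin 2) (Fin 2) ℂ :=
  !![Complex.exp (Complex.I * ψ), 0; 0, Complex.exp (-(Complex.I * ψ))]

lemma cexpI (c : ℝ) : Complex.exp (Complex.I * c) = Real.cos c + Real.sin c * Complex.I := by
  rw [mul_comm, Complex.exp_mul_I, Complex.ofReal_cos, Complex.ofReal_sin]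

lemma Dr_cos_sin (ψ : ℝ) : Dr ψ =
    !![(Real.cos ψ : ℂ) + Real.sin ψ * Complex.I, 0;
       0, (Real.cos ψ : ℂ) - Real.sin ψ * Complex.I] := by
  have h2 : Complex.exp (-(Complex.I * (ψ : ℂ))) =
      (Real.cos ψ : ℂ) - Real.sin ψ * Complex.I := by
    have h : -(Complex.I * (ψ : ℂ)) = Complex.I * ((-ψ : ℝ) : ℂ) := by push_cast; ring
    rw [h, cexpI, Real.cos_neg, Real.sin_neg]; push_cast; ring
  rw [Dr, cexpI, h2]

lemma Dr_pi : Dr Real.pi = -1 := by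
  rw [Dr_cos_sin]; ext i j
  fin_cases i <;> fin_cases j <;> simp [Matrix.one_apply]

lemma Dr_neg_pi : Dr (-Real.pi) = -1 := by
  rw [Dr_cos_sin]; ext i j
  fin_cases i <;> fin_cases j <;> simp [Matrix.one_apply]

lemma Dr_pi_half : Dr (Real.pi / 2) = !![Complex.I, 0; 0, -Complex.I] := by
  rw [Dr_cos_sin]; ext i j
  fin_cases i <;> fin_cases j <;> simp

lemma Dr_neg_pi_half : Dr (-(Real.pi / 2)) = !![-Complex.I, 0; 0, Complex.I] := by
  rw [Dr_cos_sin]; ext i j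
  fin_cases i <;> fin_cases j <;> simp

lemma Dr_neg_one_pow_pi (k : ℕ) : Dr ((-1 : ℝ) ^ k * Real.pi) = -1 := by
  rcases Nat.even_or_odd k with h | h
  · rw [h.neg_one_pow, one_mul, Dr_pi]
  · rw [h.neg_one_pow, neg_one_mul, Dr_neg_pi]

lemma PZ_mul_PZ : PZ * PZ = 1 := by
  ext i j
  fin_cases i <;> fin_cases j <;>
    simp [PZ, Matrix.mul_apply, Fin.sum_univ_two, Matrix.one_apply]

/-- `PZ` as a unit of the matrix ring. -/
noncomputable def uPZ : (Matrix (Fin 2) (Fin 2) ℂ)ˣ := ⟨PZ, PZ, PZ_mul_PZ, PZ_mul_PZ⟩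

lemma smul_PZ_diag (c : ℂ) : c • PZ = Matrix.diagonal ![c, -c] := by
  ext i j
  fin_cases i <;> fin_cases j <;> simp [PZ, Matrix.diagonal]

lemma expZ (ψ : ℝ) : NormedSpace.exp ((Complex.I * (ψ : ℂ)) • PZ) = Dr ψ := by
  rw [smul_PZ_diag, Matrix.exp_diagonal]
  ext i j
  fin_cases i <;> fin_cases j <;>
    simp [Dr, Matrix.diagonal, ← Complex.exp_eq_exp_ℂ]

lemma Dr_mul (a b : ℝ) : Dr a * Dr b = Dr (a + b) := by
  ext i j
  fin_cases i <;> fin_cases j <;>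
    simp [Dr, Matrix.mul_apply, Fin.sum_univ_two, ← Complex.exp_add] <;> ring_nf

lemma Dr_zero : Dr 0 = 1 := by
  ext i j
  fin_cases i <;> fin_cases j <;> simp [Dr, Matrix.one_apply]

lemma helper (A R : Matrix (Fin 2) (Fin 2) ℂ) (a : ℝ) :
    (PZ * A * PZ) * Dr a * (PZ * R * PZ) = PZ * (A * Dr a * R) * PZ := by
  rw [eta_fin_two A, eta_fin_two R]
  simp only [PZ, Dr, Matrix.mul_fin_two]
  ext i j
  fin_cases i <;> fin_cases j <;> simp <;> ring

lemma sand_pos (A B X : Matrix (Fin 2) (Fin 2) ℂ) :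
    Dr (-(Real.pi/2)) * (A * (B * (Dr (-(Real.pi/2)) * (PZ * X)))) = -(PZ * (A * (B * X))) := by
  rw [Dr_neg_pi_half, eta_fin_two A, eta_fin_two B, eta_fin_two X]
  simp only [PZ, Matrix.mul_fin_two]
  ext i j
  fin_cases i <;> fin_cases j <;> simp [Complex.I_sq] <;> ring_nf <;>
    simp [Complex.I_sq] <;> ring

lemma sand_neg (A B X : Matrix (Fin 2) (Fin 2) ℂ) :
    Dr (Real.pi/2) * (A * (B * (Dr (Real.pi/2) * (PZ * X)))) = -(PZ * (A * (B * X))) := by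
  rw [Dr_pi_half, eta_fin_two A, eta_fin_two B, eta_fin_two X]
  simp only [PZ, Matrix.mul_fin_two]
  ext i j
  fin_cases i <;> fin_cases j <;> simp [Complex.I_sq] <;> ring_nf <;>
    simp [Complex.I_sq] <;> ring

lemma base_case (A B : Matrix (Fin 2) (Fin 2) ℂ) :
    Dr (-(Real.pi/2)) * (A * (B * Dr (Real.pi/2))) = PZ * (A * B) * PZ := by
  rw [Dr_pi_half, Dr_neg_pi_half, eta_fin_two A, eta_fin_two B]
  simp only [PZ, Matrix.mul_fin_two]
  ext i j
  fin_cases i <;> fin_cases j <;> simp [Complex.I_sq] <;> ring_nf <;>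
    simp [Complex.I_sq] <;> ring

lemma conj_list (A : Matrix (Fin 2) (Fin 2) ℂ) (l : List ℝ) :
    (l.map (fun ψ => PZ * A * PZ * Dr ψ)).prod
      = PZ * (l.map (fun ψ => A * Dr ψ)).prod * PZ := by
  induction l with
  | nil => simp [PZ_mul_PZ]
  | cons a l ih =>
      simp only [List.map_cons, List.prod_cons]
      rw [ih]
      exact helper A _ a

lemma key (A : Matrix (Fin 2) (Fin 2) ℂ) (m : ℕ) (φ : Fin (m+1) → ℝ) :
    Dr ((-1 : ℝ)^(m+1) * (Real.pi/2)) *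
      ((List.finRange (m+1)).map (fun j : Fin (m+1) => A * Dr (if (j : ℕ) = m then -φ j + Real.pi/2
        else -φ j + (-1:ℝ)^(m - (j:ℕ)) * Real.pi))).prod
    = PZ * ((List.finRange (m+1)).map (fun j : Fin (m+1) => A * Dr (-φ j))).prod * PZ := by
  induction m with
  | zero =>
      simp only [List.finRange_succ, List.finRange_zero, List.map_nil, List.map_cons,
        List.prod_cons, List.prod_nil, mul_one, Fin.val_zero, if_pos, pow_one, neg_one_mul]
      rw [← Dr_mul]
      rw [show ((-1:ℝ))^(0+1) * (Real.pi/2) = -(Real.pi/2) by norm_num]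
      exact base_case A (Dr (-φ 0))
  | succ m ih =>
      rw [List.finRange_succ (n := m+1)]
      simp only [List.map_cons, List.prod_cons, List.map_map, Function.comp_def, Fin.val_succ,
        Nat.succ_sub_succ, Nat.sub_zero, add_left_inj]
      rw [if_neg (show ¬(((0 : Fin (m+1+1)) : ℕ) = m+1) by simp)]
      simp only [Fin.val_zero, Nat.sub_zero]
      have h := ih (fun j => φ j.succ)
      rw [show (-1:ℝ)^(m+1+1) * (Real.pi/2) = -((-1:ℝ)^(m+1)*(Real.pi/2)) by rw [pow_succ]; ring]
      rw [← Dr_mul, Dr_neg_one_pow_pi]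
      have hT : ∀ T N : Matrix (Fin 2) (Fin 2) ℂ,
          Dr ((-1:ℝ)^(m+1) * (Real.pi/2)) * T = PZ * N * PZ →
          T = Dr (-((-1:ℝ)^(m+1) * (Real.pi/2))) * (PZ * N * PZ) := by
        intro T N hTN
        rw [← hTN, ← mul_assoc, Dr_mul, neg_add_cancel, Dr_zero, one_mul]
      rw [hT _ _ h]
      rcases neg_one_pow_eq_or ℝ (m+1) with hs | hs <;> rw [hs]
      · rw [one_mul]
        simp only [mul_neg_one, mul_neg, neg_mul, one_mul, mul_assoc]
        rw [sand_pos, neg_neg]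
      · rw [neg_one_mul, neg_neg]
        simp only [mul_neg_one, mul_neg, neg_mul, one_mul, mul_assoc]
        rw [sand_neg, neg_neg]

lemma map_conj_eq (X : Matrix (Fin 2) (Fin 2) ℂ) : X.map (starRingEnd ℂ) = (Xᵀ)ᴴ := by
  ext i j
  simp [Matrix.conjTranspose_apply, Matrix.transpose_apply, Matrix.map_apply]

lemma PZ_Dr_comm (a : ℝ) : PZ * Dr a = Dr a * PZ := by
  ext i j
  fin_cases i <;> fin_cases j <;>
    simp [PZ, Dr, Matrix.mul_apply, Fin.sum_univ_two] <;> ring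

lemma Dr_conj (ψ : ℝ) : (Dr ψ).map (starRingEnd ℂ) = Dr (-ψ) := by
  have h1 : (starRingEnd ℂ) (Complex.exp (Complex.I * ψ)) = Complex.exp (-(Complex.I * ψ)) := by
    rw [← Complex.exp_conj]; congr 1; simp
  have h2 : (starRingEnd ℂ) (Complex.exp (-(Complex.I * ψ))) = Complex.exp (Complex.I * ψ) := by
    rw [← Complex.exp_conj]; congr 1; simp
  have h3 : Complex.I * ((-ψ : ℝ) : ℂ) = -(Complex.I * ψ) := by push_cast; ring
  ext i j
  fin_cases i <;> fin_cases j <;>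
    simp [Dr, Matrix.map_apply, h1, h2, h3]

lemma conjA (θ : ℝ) :
    (NormedSpace.exp ((Complex.I * (θ : ℂ)) • PX)).map (starRingEnd ℂ)
      = PZ * NormedSpace.exp ((Complex.I * (θ : ℂ)) • PX) * PZ := by
  have hPXT : PXᵀ = PX := by
    ext i j; fin_cases i <;> fin_cases j <;> simp [PX]
  have hPXH : PXᴴ = PX := by
    ext i j; fin_cases i <;> fin_cases j <;> simp [PX]
  have hswap : PZ * ((Complex.I * (θ : ℂ)) • PX) * PZ = (-(Complex.I * (θ : ℂ))) • PX := by
    ext i j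
    fin_cases i <;> fin_cases j <;>
      simp [PX, PZ, Matrix.mul_apply, Fin.sum_univ_two]
  have h1 : ((((Complex.I * (θ : ℂ)) • PX)ᵀ)ᴴ) = (-(Complex.I * (θ : ℂ))) • PX := by
    rw [Matrix.transpose_smul, hPXT, Matrix.conjTranspose_smul, hPXH]
    congr 1
    simp
  rw [map_conj_eq, ← Matrix.exp_transpose, ← Matrix.exp_conjTranspose, h1, ← hswap]
  have h2 : PZ * ((Complex.I * (θ : ℂ)) • PX) * PZ
      = (uPZ : Matrix (Fin 2) (Fin 2) ℂ) * ((Complex.I * (θ : ℂ)) • PX)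
        * (↑uPZ⁻¹ : Matrix (Fin 2) (Fin 2) ℂ) := rfl
  rw [h2, Matrix.exp_units_conj]
  rfl

end QSPaux

open QSPaux in
/-- `Z · U(x, -Ψ) · Z` equals the entrywise complex conjugate of `U(x, Ψ)`;
moreover the explicitly given modified phase factors `Ψ̃` also realize the entrywise complex
conjugate of `U(x, Ψ)`. -/
theorem qsp_negate_phases_conj (d : ℕ) (hd : 1 ≤ d) (Ψ : Fin (d + 1) → ℝ) (x : ℝ)
    (hx : x ∈ Set.Icc (-1 : ℝ) 1) :
    PZ * qspU d (-Ψ) x * PZ = (qspU d Ψ x).map (starRingEnd ℂ) ∧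
    qspU d (fun k => if (k : ℕ) = 0 then -Ψ k + (-1 : ℝ) ^ d * (Real.pi / 2)
      else if (k : ℕ) = d then -Ψ k + Real.pi / 2
      else -Ψ k + (-1 : ℝ) ^ (d - (k : ℕ)) * Real.pi) x
      = (qspU d Ψ x).map (starRingEnd ℂ) := by
  obtain ⟨m, rfl⟩ : ∃ m, d = m + 1 := ⟨d - 1, by omega⟩
  set A := NormedSpace.exp ((Complex.I * (Real.arccos x : ℂ)) • PX) with hA
  -- rewrite `qspU` in terms of `Dr` and `A`
  have hU : ∀ Φ : Fin (m + 1 + 1) → ℝ, qspU (m + 1) Φ x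
      = Dr (Φ 0) * ((List.finRange (m + 1)).map (fun j => A * Dr (Φ j.succ))).prod := by
    intro Φ
    rw [qspU]
    simp only [expZ, ← hA]
  -- the conjugated unitary
  have hconj : (qspU (m + 1) Ψ x).map (starRingEnd ℂ)
      = Dr (-(Ψ 0)) *
        ((List.finRange (m + 1)).map (fun j => PZ * A * PZ * Dr (-(Ψ j.succ)))).prod := by
    rw [hU Ψ]
    have hmm : ∀ X : Matrix (Fin 2) (Fin 2) ℂ,
        X.map (starRingEnd ℂ) = (starRingEnd ℂ).mapMatrix X := fun _ => rfl
    rw [hmm, _root_.map_mul, map_list_prod, List.map_map]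
    congr 1
    · rw [← hmm, Dr_conj]
    · refine congrArg List.prod (List.map_congr_left fun j _ => ?_)
      simp only [Function.comp_apply, RingHom.mapMatrix_apply]
      rw [Matrix.map_mul, Dr_conj, hA, conjA, ← hA]
  -- factor the list through a list of reals
  have hfac : ∀ (B : Matrix (Fin 2) (Fin 2) ℂ) (g : Fin (m + 1) → ℝ),
      (List.finRange (m + 1)).map (fun j => B * Dr (g j))
        = (((List.finRange (m + 1)).map g).map (fun ψ => B * Dr ψ)) := by
    intro B g
    rw [List.map_map]
    rfl
  have part1 : PZ * qspU (m + 1) (-Ψ) x * PZ = (qspU (m + 1) Ψ x).map (starRingEnd ℂ) := by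
    rw [hconj, hU (-Ψ)]
    simp only [Pi.neg_apply]
    rw [hfac A (fun j => -(Ψ j.succ)), hfac (PZ * A * PZ) (fun j => -(Ψ j.succ)), conj_list]
    simp only [← mul_assoc]
    rw [PZ_Dr_comm]
  refine ⟨part1, ?_⟩
  rw [← part1, hU, hU (-Ψ)]
  simp only [Pi.neg_apply]
  have h0 : ((fun k : Fin (m + 1 + 1) => if (k : ℕ) = 0 then -Ψ k + (-1 : ℝ) ^ (m+1) * (Real.pi / 2)
      else if (k : ℕ) = m + 1 then -Ψ k + Real.pi / 2
      else -Ψ k + (-1 : ℝ) ^ ((m+1) - (k : ℕ)) * Real.pi) 0)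
      = -Ψ 0 + (-1 : ℝ) ^ (m+1) * (Real.pi / 2) := by
    simp
  have hsucc : ∀ j : Fin (m + 1),
      ((fun k : Fin (m + 1 + 1) => if (k : ℕ) = 0 then -Ψ k + (-1 : ℝ) ^ (m+1) * (Real.pi / 2)
      else if (k : ℕ) = m + 1 then -Ψ k + Real.pi / 2
      else -Ψ k + (-1 : ℝ) ^ ((m+1) - (k : ℕ)) * Real.pi) j.succ)
      = (if (j : ℕ) = m then -Ψ j.succ + Real.pi / 2
        else -Ψ j.succ + (-1 : ℝ) ^ (m - (j : ℕ)) * Real.pi) := by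
    intro j
    simp only [Fin.val_succ, Nat.succ_sub_succ, add_left_inj, Nat.succ_ne_zero, if_false]
  simp only [h0, hsucc]
  rw [← Dr_mul]
  have hk := key A m (fun j => Ψ j.succ)
  rw [mul_assoc, hk]
  simp only [← mul_assoc]
  rw [PZ_Dr_comm]
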